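/- Let I = (𝔼, D, c, f) be a CMP instance whose objective f is of type bottleneck, and let E = {e_1,…,e_k} ⊆ 𝔼. Then Σ_{l=1}^k u'(I,e_l) ≤ u'(I,E). -/

import Mathlib

open scoped ENNReal BigOperators

/-- Objective type of a combinatorial minimization problem:
sum, product, or bottleneck. -/
inductive ObjType where
  | sum : ObjType
  | prod : ObjType
  | bottleneck : ObjType
deriving DecidableEq

/-- The cost `f_c(S)` of a feasible solution `S` under cost function `c`:
the sum, the product, or the maximum (for nonempty `S`) of the element costs. -/
noncomputable def objCost {ι : Type*} (t : ObjType) (c : ι → ℝ) (S : Finset ι) : ℝ :=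
  match t with
  | ObjType.sum => ∑ e ∈ S, c e
  | ObjType.prod => ∏ e ∈ S, c e
  | ObjType.bottleneck => if h : S.Nonempty then S.sup' h c else 0

/-- The optimal objective value `f(I)` of the instance with feasible set `D`. -/
noncomputable def optVal {ι : Type*} (t : ObjType) (c : ι → ℝ) (D : Finset (Finset ι)) : ℝ :=
  if h : D.Nonempty then D.inf' h (objCost t c) else 0

/-- `S` is an optimal solution of the instance `(𝔼, D, c, f)`. -/
def isOpt {ι : Type*} (t : ObjType) (c : ι → ℝ) (D : Finset (Finset ι)) (S : Finset ι) : Prop :=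
  S ∈ D ∧ objCost t c S = optVal t c D

/-- `0 ≤ a < maxdec(e)`, where `maxdec(e) = ∞` for sum/bottleneck objectives and
`maxdec(e) = c(e)` for the product objective. -/
def decOK {ι : Type*} (t : ObjType) (c : ι → ℝ) (e : ι) (a : ℝ) : Prop :=
  0 ≤ a ∧ (t = ObjType.prod → a < c e)

/-- Extended single upper tolerance
`u'(I,e) = sup {α ≥ 0 : every optimal solution of I is optimal for I_{α,e}}` valued in `[0,∞]`. -/
noncomputable def uTol {ι : Type*} [DecidableEq ι] (t : ObjType) (c : ι → ℝ)
    (D : Finset (Finset ι)) (e : ι) : ℝ≥0∞ :=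
  sSup (ENNReal.ofReal '' {a : ℝ | 0 ≤ a ∧
    ∀ S : Finset ι, isOpt t c D S →
      isOpt t (fun x => if x = e then c x + a else c x) D S})

/-- Extended regular set upper tolerance `u'(I,E)`, valued in `[0,∞]`. -/
noncomputable def uTolSet {ι : Type*} [DecidableEq ι] (t : ObjType) (c : ι → ℝ)
    (D : Finset (Finset ι)) (E : Finset ι) : ℝ≥0∞ :=
  sSup (ENNReal.ofReal '' {a : ℝ |
    ∀ S : Finset ι, isOpt t c D S →
      ∃ α : ι → ℝ, (∀ x, 0 ≤ α x) ∧ (∀ x ∉ E, α x = 0) ∧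
        a = ∑ x ∈ E, α x ∧ isOpt t (fun x => c x + α x) D S})

/-- Extended reverse set upper tolerance `u_b'(I,E)`, valued in `[0,∞]` (`inf ∅ = ∞`). -/
noncomputable def uTolSetRev {ι : Type*} [DecidableEq ι] (t : ObjType) (c : ι → ℝ)
    (D : Finset (Finset ι)) (E : Finset ι) : ℝ≥0∞ :=
  sInf (ENNReal.ofReal '' {a : ℝ |
    ∃ S : Finset ι, isOpt t c D S ∧
      ∃ α : ι → ℝ, (∀ x, 0 ≤ α x) ∧ (∀ x ∉ E, α x = 0) ∧
        a = ∑ x ∈ E, α x ∧ ¬ isOpt t (fun x => c x + α x) D S})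

/-- New single lower tolerance
`l'(I,e) = sup {α : 0 ≤ α < maxdec(e), f(I_{−α,e}) = f(I)}`, valued in `[0,∞]`. -/
noncomputable def lTol {ι : Type*} [DecidableEq ι] (t : ObjType) (c : ι → ℝ)
    (D : Finset (Finset ι)) (e : ι) : ℝ≥0∞ :=
  sSup (ENNReal.ofReal '' {a : ℝ | decOK t c e a ∧
    optVal t (fun x => if x = e then c x - a else c x) D = optVal t c D})

/-- New regular set lower tolerance `l'(I,E)`, valued in `[0,∞]`. -/
noncomputable def lTolSet {ι : Type*} [DecidableEq ι] (t : ObjType) (c : ι → ℝ)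
    (D : Finset (Finset ι)) (E : Finset ι) : ℝ≥0∞ :=
  sSup (ENNReal.ofReal '' {a : ℝ |
    ∃ α : ι → ℝ, (∀ x ∈ E, decOK t c x (α x)) ∧ (∀ x ∉ E, α x = 0) ∧
      a = ∑ x ∈ E, α x ∧ optVal t (fun x => c x - α x) D = optVal t c D})

/-- New reverse set lower tolerance `l_b'(I,E)`, valued in `[0,∞]` (`inf ∅ = ∞`). -/
noncomputable def lTolSetRev {ι : Type*} [DecidableEq ι] (t : ObjType) (c : ι → ℝ)
    (D : Finset (Finset ι)) (E : Finset ι) : ℝ≥0∞ :=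
  sInf (ENNReal.ofReal '' {a : ℝ |
    ∃ α : ι → ℝ, (∀ x ∈ E, decOK t c x (α x)) ∧ (∀ x ∉ E, α x = 0) ∧
      a = ∑ x ∈ E, α x ∧ optVal t (fun x => c x - α x) D < optVal t c D})


-- offset-sum-sup lemma
lemma ennreal_offset_sum_sSup_le {ι : Type*} [DecidableEq ι] (E : Finset ι)
    (A : ι → Set ℝ≥0∞) (hA : ∀ e ∈ E, (A e).Nonempty) :
    ∀ (off T : ℝ≥0∞),
    (∀ b : ι → ℝ≥0∞, (∀ e ∈ E, b e ∈ A e) → off + ∑ e ∈ E, b e ≤ T) →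
    off + ∑ e ∈ E, sSup (A e) ≤ T := by
  classical
  induction E using Finset.induction_on with
  | empty => intro off T h; simpa using h (fun _ => 0) (by simp)
  | insert _ _ hnotmem ih =>
    rename_i a s
    intro off T h
    rw [Finset.sum_insert hnotmem, ← add_assoc, add_comm off (sSup (A a)),
      ENNReal.sSup_add (hA a (Finset.mem_insert_self a s))]
    rw [ENNReal.biSup_add (hA a (Finset.mem_insert_self a s))]
    refine iSup₂_le fun x hx => ?_
    rw [add_comm x off]
    refine ih (fun e he => hA e (Finset.mem_insert_of_mem he)) (off + x) T ?_
    intro b hb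
    have := h (fun e => if e = a then x else b e) ?_
    · rw [Finset.sum_insert hnotmem] at this
      simp only [if_pos rfl] at this
      rw [Finset.sum_congr rfl (fun e he => if_neg (by intro h'; exact hnotmem (h' ▸ he)))] at this
      calc off + x + ∑ e ∈ s, b e = off + (x + ∑ e ∈ s, b e) := by rw [add_assoc]
        _ ≤ T := this
    · intro e he
      rcases Finset.mem_insert.1 he with rfl | he
      · simpa using hx
      · show (if e = a then x else b e) ∈ A e; rw [if_neg (by intro h'; exact hnotmem (h' ▸ he))]; exact hb e he

lemma bottleneck_combine {ι : Type*} [DecidableEq ι]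
    (c : ι → ℝ) (D : Finset (Finset ι)) (hD : D.Nonempty) (hSne : ∀ S ∈ D, S.Nonempty)
    (E : Finset ι) (hE : E.Nonempty) (b : ι → ℝ)
    (hb0 : ∀ e ∈ E, 0 ≤ b e)
    (hb : ∀ e ∈ E, ∀ S : Finset ι, isOpt ObjType.bottleneck c D S →
      isOpt ObjType.bottleneck (fun x => if x = e then c x + b e else c x) D S)
    (S : Finset ι) (hS : isOpt ObjType.bottleneck c D S) :
    isOpt ObjType.bottleneck (fun x => c x + (if x ∈ E then b x else 0)) D S := by
  classical
  obtain ⟨hSD, hSopt⟩ := hS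
  set c' : ι → ℝ := fun x => c x + (if x ∈ E then b x else 0) with hc'
  set ce : ι → ι → ℝ := fun e x => if x = e then c x + b e else c x with hce
  -- pointwise: c' x = sup over e ∈ E of ce e x
  have hpt : ∀ x, c' x = E.sup' hE (fun e => ce e x) := by
    intro x
    by_cases hx : x ∈ E
    · apply le_antisymm
      · simp only [hc', if_pos hx]
        exact Finset.le_sup'_of_le _ hx (by simp [hce])
      · apply Finset.sup'_le
        intro e he
        simp only [hce, hc', if_pos hx]
        rcases eq_or_ne x e with h | h
        · rw [if_pos h, h]
        · rw [if_neg h]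
          exact le_add_of_nonneg_right (hb0 x hx)
    · apply le_antisymm
      · obtain ⟨e, he⟩ := hE
        refine Finset.le_sup'_of_le _ he ?_
        have hxe : x ≠ e := fun h => hx (h ▸ he)
        simp [hce, hc', hx, hxe]
      · apply Finset.sup'_le
        intro e he
        have hxe : x ≠ e := fun h => hx (h ▸ he)
        simp [hce, hc', hx, hxe]
  -- sup' over any nonempty T
  have hsup : ∀ (T : Finset ι) (hT : T.Nonempty),
      T.sup' hT c' = E.sup' hE (fun e => T.sup' hT (ce e)) := by
    intro T hT
    rw [Finset.sup'_congr hT rfl (fun x _ => hpt x)]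
    exact Finset.sup'_comm hT hE (fun x e => ce e x)
  have hobj : ∀ T ∈ D, objCost ObjType.bottleneck c' T
      = E.sup' hE (fun e => objCost ObjType.bottleneck (ce e) T) := by
    intro T hT
    have hTne := hSne T hT
    simp only [objCost, dif_pos hTne]
    exact hsup T hTne
  -- single optimality of S for each ce e
  have hopt_e : ∀ e ∈ E, objCost ObjType.bottleneck (ce e) S
      = optVal ObjType.bottleneck (ce e) D := fun e he => (hb e he S ⟨hSD, hSopt⟩).2
  refine ⟨hSD, ?_⟩
  have hv : optVal ObjType.bottleneck c' D = D.inf' hD (objCost ObjType.bottleneck c') :=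
    dif_pos hD
  apply le_antisymm
  · rw [hv]
    apply Finset.le_inf'
    intro T hT
    rw [hobj T hT, hobj S hSD]
    apply Finset.sup'_le
    intro e he
    refine le_trans ?_ (Finset.le_sup' _ he)
    rw [hopt_e e he]
    have : optVal ObjType.bottleneck (ce e) D
        = D.inf' hD (objCost ObjType.bottleneck (ce e)) := dif_pos hD
    rw [this]
    exact Finset.inf'_le _ hT
  · rw [hv]
    exact Finset.inf'_le _ hSD

/-- Theorem (regular set upper tolerance, bottleneck case):
`Σ_{l} u'(I,e_l) ≤ u'(I,E)` for the bottleneck objective. -/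
theorem urg_sum_le_bottleneck {ι : Type*} [Fintype ι] [DecidableEq ι]
    (c : ι → ℝ) (D : Finset (Finset ι))
    (hD : D.Nonempty) (hSne : ∀ S ∈ D, S.Nonempty)
    (E : Finset ι) (hE : E.Nonempty) :
    (∑ e ∈ E, uTol ObjType.bottleneck c D e) ≤ uTolSet ObjType.bottleneck c D E := by
  classical
  have key := ennreal_offset_sum_sSup_le E
    (fun e => ENNReal.ofReal '' {a : ℝ | 0 ≤ a ∧
      ∀ S : Finset ι, isOpt ObjType.bottleneck c D S →
        isOpt ObjType.bottleneck (fun x => if x = e then c x + a else c x) D S})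
    (fun e _ => ⟨0, ⟨0, ⟨le_refl 0, fun S hS => by
      have : (fun x => if x = e then c x + (0:ℝ) else c x) = c := by
        funext x; split <;> simp
      rw [this]; exact hS⟩, by simp⟩⟩)
    0 (uTolSet ObjType.bottleneck c D E) ?_
  · simpa [uTol] using key
  · intro b hb
    rw [zero_add]
    -- extract real witnesses
    have hex : ∀ e, ∃ r : ℝ, e ∈ E → ((0 ≤ r ∧
        ∀ S : Finset ι, isOpt ObjType.bottleneck c D S →
          isOpt ObjType.bottleneck (fun x => if x = e then c x + r else c x) D S)
        ∧ ENNReal.ofReal r = b e) := by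
      intro e
      by_cases he : e ∈ E
      · obtain ⟨r, hr, hrb⟩ := hb e he
        exact ⟨r, fun _ => ⟨hr, hrb⟩⟩
      · exact ⟨0, fun h => absurd h he⟩
    choose r hr using hex
    have hr0 : ∀ e ∈ E, 0 ≤ r e := fun e he => ((hr e he).1).1
    have hsum : ∑ e ∈ E, b e = ENNReal.ofReal (∑ e ∈ E, r e) := by
      rw [ENNReal.ofReal_sum_of_nonneg hr0]
      exact Finset.sum_congr rfl fun e he => ((hr e he).2).symm
    rw [hsum]
    apply le_sSup
    refine ⟨∑ e ∈ E, r e, ?_, rfl⟩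
    intro S hS
    refine ⟨fun x => if x ∈ E then r x else 0, ?_, ?_, ?_, ?_⟩
    · intro x
      by_cases hx : x ∈ E
      · simpa [hx] using hr0 x hx
      · simp [hx]
    · intro x hx; simp [hx]
    · exact (Finset.sum_congr rfl fun x hx => by simp [hx]).symm
    · exact bottleneck_combine c D hD hSne E hE r hr0
        (fun e he => ((hr e he).1).2) S hS
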